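/- arXiv:1405.0065 — 2 statements merged into one kernel-verified Lean document; each statement's English description precedes it below -/
import Mathlib

section
/- Let k ≥ 2 and let r = r_{k-1}(K_k^{(k-1)}; k colors) be the k-color Ramsey number for (k−1)-uniform cliques on k vertices. Let f be any k-coloring of the (k−1)-subsets of a vertex set V with colors {0,...,k−1}, and define a k-graph A on V by making a k-set E an edge iff the sum of f over the (k−1)-subsets of E is not ≡ 0 mod k. Then A contains no copy of K_r^{(k)}. -/
open Finset

/-- Suppose `r` has the `k`-color Ramsey property for `(k−1)`-uniform cliques on `k`
vertices: every `k`-coloring of the `(k−1)`-subsets of an `r`-set admits a `k`-set all of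
whose `(k−1)`-subsets get the same color.  Let `f` be a `(ℤ/kℤ)`-coloring of the
`(k−1)`-subsets of `V` and let a `k`-set `E` be an edge iff the color sum over its
`(k−1)`-subsets is nonzero mod `k`.  Then the resulting `k`-graph has no copy of
`K_r^{(k)}`. -/
theorem stmt7 {V : Type*} [DecidableEq V] (k r : ℕ) (hk : 2 ≤ k)
    (hr : ∀ S : Finset V, S.card = r → ∀ g : Finset V → ZMod k,
      ∃ Y ⊆ S, Y.card = k ∧ ∃ c : ZMod k, ∀ T ⊆ Y, T.card = k - 1 → g T = c)
    (f : Finset V → ZMod k) :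
    ¬ ∃ X : Finset V, X.card = r ∧
      ∀ E ⊆ X, E.card = k → (∑ T ∈ E.powersetCard (k - 1), f T) ≠ 0 := by
  rintro ⟨X, hX, hedge⟩
  obtain ⟨Y, hYX, hYk, c, hc⟩ := hr X hX f
  apply hedge Y hYX hYk
  have hsum : (∑ T ∈ Y.powersetCard (k - 1), f T) = (Y.powersetCard (k - 1)).card • c := by
    rw [Finset.sum_congr rfl fun T hT => ?_, Finset.sum_const]
    rw [Finset.mem_powersetCard] at hT
    exact hc T hT.1 hT.2
  rw [hsum, Finset.card_powersetCard, hYk]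
  have hck : k.choose (k - 1) = k := by
    rw [← Nat.choose_symm (Nat.sub_le k 1), Nat.sub_sub_self (le_trans (by norm_num) hk),
      Nat.choose_one_right]
  rw [hck, nsmul_eq_mul, ZMod.natCast_self, zero_mul]
end

section
/- With the random k-graph A_n^{(k)} as above, for each fixed vertex x the distribution of the link L(x) (as a (k−1)-graph on V ∖ {x}) is exactly that of the binomial random (k−1)-graph G^{(k−1)}(n−1, (k−1)/k): distinct (k−1)-sets S ⊆ V∖{x} are edges of L(x) independently, each with probability (k−1)/k. -/
open Finset

/-- In the random `k`-graph `A_n^{(k)}` given by a uniformly random `(ℤ/kℤ)`-coloring of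
the `(k−1)`-sets, for each fixed vertex `x` the link `L(x)` is distributed exactly as the
binomial random `(k−1)`-graph `G^{(k−1)}(n−1, (k−1)/k)`: for every family `𝒮` of distinct
`(k−1)`-subsets of `V ∖ {x}`, the probability (stated as an exact count over colorings)
that all members of `𝒮` are edges of the link is `((k−1)/k)^{|𝒮|}`. -/
theorem stmt9 {V : Type*} [Fintype V] [DecidableEq V] (k : ℕ) (hk : 2 ≤ k) [NeZero k]
    (x : V) (𝒮 : Finset (Finset V)) (h𝒮 : ∀ S ∈ 𝒮, S.card = k - 1 ∧ x ∉ S) :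
    (((univ : Finset (Finset V → ZMod k)).filter fun f =>
        ∀ S ∈ 𝒮, (∑ T ∈ (insert x S).powersetCard (k - 1), f T) ≠ 0).card : ℝ) =
      ((k - 1) / k) ^ 𝒮.card * (Fintype.card (Finset V → ZMod k) : ℝ) := by
  classical
  set c : Finset V → (Finset V → ZMod k) → ZMod k :=
    fun S f => ∑ U ∈ ((insert x S).powersetCard (k - 1)).erase S, f U with hc
  have hmem : ∀ S ∈ 𝒮, ∀ U ∈ ((insert x S).powersetCard (k - 1)).erase S, x ∈ U := by
    intro S hS U hU
    obtain ⟨hScard, hxS⟩ := h𝒮 S hS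
    rw [mem_erase, mem_powersetCard] at hU
    by_contra hxU
    apply hU.1
    have hUT : U ⊆ S := by
      intro a ha
      rcases mem_insert.1 (hU.2.1 ha) with h | h
      · exact absurd (h ▸ ha) hxU
      · exact h
    exact eq_of_subset_of_card_le hUT (by rw [hU.2.2, hScard])
  have hUnotin : ∀ S ∈ 𝒮, ∀ U ∈ ((insert x S).powersetCard (k - 1)).erase S, U ∉ 𝒮 := by
    intro S hS U hU hU𝒮
    exact (h𝒮 U hU𝒮).2 (hmem S hS U hU)
  have hsum : ∀ S ∈ 𝒮, ∀ f : Finset V → ZMod k,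
      (∑ T ∈ (insert x S).powersetCard (k - 1), f T) = f S + c S f := by
    intro S hS f
    obtain ⟨hScard, hxS⟩ := h𝒮 S hS
    rw [hc]
    exact (Finset.add_sum_erase _ f (by
      rw [mem_powersetCard]; exact ⟨subset_insert _ _, hScard⟩)).symm
  set φ : (Finset V → ZMod k) → (Finset V → ZMod k) :=
    fun f T => if T ∈ 𝒮 then f T + c T f else f T with hφ
  set ψ : (Finset V → ZMod k) → (Finset V → ZMod k) :=
    fun g T => if T ∈ 𝒮 then g T - c T g else g T with hψ
  -- the correction term is unchanged by φ and ψ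
  have hcφ : ∀ S ∈ 𝒮, ∀ f, c S (φ f) = c S f := by
    intro S hS f
    refine Finset.sum_congr rfl fun U hU => ?_
    simp only [hφ, if_neg (hUnotin S hS U hU)]
  have hcψ : ∀ S ∈ 𝒮, ∀ g, c S (ψ g) = c S g := by
    intro S hS g
    refine Finset.sum_congr rfl fun U hU => ?_
    simp only [hψ, if_neg (hUnotin S hS U hU)]
  have hψφ : ∀ f, ψ (φ f) = f := by
    intro f; funext T
    by_cases hT : T ∈ 𝒮
    · simp only [hψ, if_pos hT, hcφ T hT]
      simp only [hφ, if_pos hT]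
      abel
    · simp only [hψ, hφ, if_neg hT]
  have hφψ : ∀ g, φ (ψ g) = g := by
    intro g; funext T
    by_cases hT : T ∈ 𝒮
    · simp only [hφ, if_pos hT, hcψ T hT]
      simp only [hψ, if_pos hT]
      abel
    · simp only [hφ, hψ, if_neg hT]
  have hcard : ((univ : Finset (Finset V → ZMod k)).filter fun f =>
        ∀ S ∈ 𝒮, (∑ T ∈ (insert x S).powersetCard (k - 1), f T) ≠ 0).card =
      ((univ : Finset (Finset V → ZMod k)).filter fun g => ∀ S ∈ 𝒮, g S ≠ 0).card := by
    refine Finset.card_nbij' φ ψ ?_ ?_ ?_ ?_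
    · intro f hf
      rw [mem_coe, mem_filter] at hf ⊢
      refine ⟨mem_univ _, fun S hS => ?_⟩
      have := hf.2 S hS
      rw [hsum S hS f] at this
      simpa only [hφ, if_pos hS] using this
    · intro g hg
      rw [mem_coe, mem_filter] at hg ⊢
      refine ⟨mem_univ _, fun S hS => ?_⟩
      rw [hsum S hS (ψ g)]
      have := hg.2 S hS
      rw [hcψ S hS]
      simp only [hψ, if_pos hS]
      intro h
      apply this
      linear_combination h
    · intro f _; exact hψφ f
    · intro g _; exact hφψ g
  -- compute the count of the simplified event
  have hset : ((univ : Finset (Finset V → ZMod k)).filter fun g => ∀ S ∈ 𝒮, g S ≠ 0) =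
      Fintype.piFinset (fun T : Finset V =>
        if T ∈ 𝒮 then (univ : Finset (ZMod k)).erase 0 else univ) := by
    ext g
    simp only [mem_filter, mem_univ, true_and, Fintype.mem_piFinset]
    constructor
    · intro h T
      by_cases hT : T ∈ 𝒮
      · simp [if_pos hT, h T hT]
      · simp [if_neg hT]
    · intro h S hS
      have := h S
      rw [if_pos hS, mem_erase] at this
      exact this.1
  have hk0 : (0 : ℕ) < k := Nat.lt_of_lt_of_le two_pos hk
  have hcard2 : ((univ : Finset (Finset V → ZMod k)).filter fun g => ∀ S ∈ 𝒮, g S ≠ 0).card =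
      (k - 1) ^ 𝒮.card * k ^ (Fintype.card (Finset V) - 𝒮.card) := by
    rw [hset, Fintype.card_piFinset]
    have : ∀ T : Finset V,
        ((if T ∈ 𝒮 then (univ : Finset (ZMod k)).erase 0 else univ)).card =
        if T ∈ 𝒮 then k - 1 else k := by
      intro T
      by_cases hT : T ∈ 𝒮
      · simp [if_pos hT, Finset.card_erase_of_mem, ZMod.card]
      · simp [if_neg hT, ZMod.card]
    simp_rw [this]
    rw [← Finset.prod_filter_mul_prod_filter_not univ (· ∈ 𝒮)]
    have h1 : (univ.filter (· ∈ 𝒮)) = 𝒮 := by ext T; simp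
    have h2 : (univ.filter (¬ · ∈ 𝒮)).card = Fintype.card (Finset V) - 𝒮.card := by
      rw [Finset.filter_not, Finset.card_sdiff_of_subset (by simp [h1] )]
      simp [h1, Finset.card_univ]
    have e1 : (∏ T ∈ univ.filter (· ∈ 𝒮), if T ∈ 𝒮 then k - 1 else k) = (k - 1) ^ 𝒮.card := by
      rw [Finset.prod_congr rfl (fun T hT => if_pos (by simpa using (Finset.mem_filter.1 hT).2)),
        Finset.prod_const, h1]
    have e2 : (∏ T ∈ univ.filter (¬ · ∈ 𝒮), if T ∈ 𝒮 then k - 1 else k) =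
        k ^ (Fintype.card (Finset V) - 𝒮.card) := by
      rw [Finset.prod_congr rfl (fun T hT => if_neg (by simpa using (Finset.mem_filter.1 hT).2)),
        Finset.prod_const, h2]
    rw [e1, e2]
  rw [hcard, hcard2]
  -- real arithmetic
  have hle : 𝒮.card ≤ Fintype.card (Finset V) := by
    simpa using Finset.card_le_card (Finset.subset_univ 𝒮)
  have hkR : (k : ℝ) ≠ 0 := Nat.cast_ne_zero.2 hk0.ne'
  rw [Fintype.card_fun, ZMod.card]
  push_cast [Nat.one_le_iff_ne_zero.1 (le_trans one_le_two hk), Nat.cast_sub hle,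
    Nat.cast_sub (le_trans one_le_two hk)]
  rw [div_pow, pow_sub₀ _ hkR hle]
  field_simp
end
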